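/- arXiv:1711.02840 — 3 statements merged into one kernel-verified Lean document; each statement's English description precedes it below -/
import Mathlib

section
/- Uniqueness of quasi-power-series expansions (Proposition on formal series, Appendix A.1): Let G₀ be a finite subset of ℝ and let G = {a + m : a ∈ G₀, m ∈ ℕ}. Let n ≥ 1, let c : ℝⁿ → ℂ be a family of coefficients vanishing at every μ = (μ₁,…,μₙ) for which some μ_l ∉ G, and let r₁,…,rₙ > 0. Assume: (i) for every z = (z₁,…,zₙ) ∈ ℂⁿ with 0 < |z_l| < r_l for all l, the family μ ↦ ‖c(μ)‖ · ∏_{l=1}^n |z_l|^{μ_l} is summable; (ii) for each l = 1,…,n there is a sequence (z_l(m))_{m∈ℕ} of complex numbers with 0 < |z_l(m)| < r_l and z_l(m) → 0 as m → ∞; and (iii) for all m₁,…,mₙ ∈ ℕ, the sum ∑_{μ} c(μ) · ∏_{l=1}^n z_l(m_l)^{μ_l} (principal-branch complex powers) equals 0. Then c(μ) = 0 for every μ. -/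
open Filter Complex

private lemma finite_G_le (G₀ : Finset ℝ) (B : ℝ) :
    {x : ℝ | (∃ a ∈ G₀, ∃ m : ℕ, x = a + m) ∧ x ≤ B}.Finite := by
  have hsub : {x : ℝ | (∃ a ∈ G₀, ∃ m : ℕ, x = a + m) ∧ x ≤ B} ⊆
      ⋃ a ∈ (G₀ : Set ℝ), (fun m : ℕ => a + (m : ℝ)) '' (Set.Iic ⌊B - a⌋₊) := by
    rintro x ⟨⟨a, ha, m, rfl⟩, hx⟩
    exact Set.mem_biUnion ha ⟨m, Nat.le_floor (by linarith), rfl⟩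
  exact Set.Finite.subset (Set.Finite.biUnion G₀.finite_toSet
    (fun a _ => (Set.finite_Iic _).image _)) hsub

private lemma one_var (G₀ : Finset ℝ) (d : ℝ → ℂ)
    (hsupp : ∀ t : ℝ, (¬ ∃ a ∈ G₀, ∃ m : ℕ, t = a + m) → d t = 0)
    (r : ℝ) (hr : 0 < r)
    (hconv : ∀ s : ℝ, 0 < s → s < r → Summable (fun t : ℝ => ‖d t‖ * s ^ t))
    (w : ℕ → ℂ) (hw : ∀ m, 0 < ‖w m‖ ∧ ‖w m‖ < r)
    (hwlim : Filter.Tendsto w Filter.atTop (nhds 0))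
    (hvanish : ∀ m, ∑' t : ℝ, d t * (w m) ^ (t : ℂ) = 0) :
    ∀ t, d t = 0 := by
  by_contra hne
  push_neg at hne
  obtain ⟨t₁, ht₁⟩ := hne
  have hG : ∀ t, d t ≠ 0 → (∃ a ∈ G₀, ∃ m : ℕ, t = a + m) := by
    intro t h; by_contra hc; exact h (hsupp t hc)
  -- minimal element of support
  have hfin : {x : ℝ | d x ≠ 0 ∧ x ≤ t₁}.Finite :=
    (finite_G_le G₀ t₁).subset (fun x hx => ⟨hG x hx.1, hx.2⟩)
  obtain ⟨t₀, ht₀mem, ht₀min⟩ := Set.exists_min_image _ id hfin ⟨t₁, ht₁, le_refl _⟩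
  have ht₀ : d t₀ ≠ 0 := ht₀mem.1
  have hmin : ∀ s, d s ≠ 0 → t₀ ≤ s := by
    intro s hs
    rcases le_or_gt s t₁ with h | h
    · exact ht₀min s ⟨hs, h⟩
    · exact le_trans ht₀mem.2 h.le
  -- gap δ
  obtain ⟨δ, hδpos, hδ⟩ : ∃ δ > 0, ∀ t, (∃ a ∈ G₀, ∃ m : ℕ, t = a + m) → t₀ < t → t₀ + δ ≤ t := by
    have hfinT : {x : ℝ | (∃ a ∈ G₀, ∃ m : ℕ, x = a + m) ∧ t₀ < x ∧ x ≤ t₀ + 1}.Finite :=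
      (finite_G_le G₀ (t₀ + 1)).subset (fun x hx => ⟨hx.1, hx.2.2⟩)
    by_cases hne : {x : ℝ | (∃ a ∈ G₀, ∃ m : ℕ, x = a + m) ∧ t₀ < x ∧ x ≤ t₀ + 1}.Nonempty
    · obtain ⟨x₀, hx₀mem, hx₀min⟩ := Set.exists_min_image _ id hfinT hne
      refine ⟨x₀ - t₀, by linarith [hx₀mem.2.1], ?_⟩
      intro t htG htgt
      rcases le_or_gt t (t₀ + 1) with h | h
      · have := hx₀min t ⟨htG, htgt, h⟩; simp only [id] at this; linarith
      · linarith [hx₀mem.2.2]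
    · refine ⟨1, one_pos, ?_⟩
      intro t htG htgt
      by_contra hc
      exact hne ⟨t, htG, htgt, by linarith⟩
  -- fixed radius ρ
  set ρ : ℝ := r / 2 with hρdef
  have hρpos : 0 < ρ := by positivity
  have hρlt : ρ < r := by linarith
  have hρsum : Summable (fun t : ℝ => ‖d t‖ * ρ ^ (t - t₀)) := by
    have := (hconv ρ hρpos hρlt).div_const (ρ ^ t₀)
    refine this.congr fun t => ?_
    rw [Real.rpow_sub hρpos, mul_div_assoc]
  set C : ℝ := ∑' t : ℝ, ‖d t‖ * ρ ^ (t - t₀) with hC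
  -- the key bound for each m with |w m| ≤ ρ
  have key : ∀ m, ‖w m‖ ≤ ρ → ‖d t₀‖ ≤ C * (‖w m‖ / ρ) ^ δ := by
    intro m hm
    set W := w m with hW
    have hWpos : 0 < ‖W‖ := (hw m).1
    have hW0 : W ≠ 0 := norm_pos_iff.mp hWpos
    have habs : ∀ t : ℝ, ‖d t * W ^ ((t : ℂ) - (t₀ : ℂ))‖
        = ‖d t‖ * ‖W‖ ^ (t - t₀) := by
      intro t
      rw [norm_mul]
      congr 1
      have : ((t : ℂ) - (t₀ : ℂ)) = ((t - t₀ : ℝ) : ℂ) := by push_cast; ring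
      rw [this, Complex.norm_cpow_real]
    have hsum2 : Summable (fun t : ℝ => d t * W ^ ((t : ℂ) - (t₀ : ℂ))) := by
      apply Summable.of_norm
      refine Summable.congr ?_ (fun t => (habs t).symm)
      have := (hconv (‖W‖) hWpos (hw m).2).div_const ((‖W‖) ^ t₀)
      refine this.congr fun t => ?_
      rw [Real.rpow_sub hWpos, mul_div_assoc]
    have hsum1 : Summable (fun t : ℝ => d t * W ^ (t : ℂ)) := by
      apply Summable.of_norm
      refine Summable.congr (hconv (‖W‖) hWpos (hw m).2) fun t => ?_
      simp [norm_mul, Complex.norm_cpow_real]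
    have heq0 : ∑' t : ℝ, d t * W ^ ((t : ℂ) - (t₀ : ℂ)) = 0 := by
      have : ∀ t : ℝ, d t * W ^ ((t : ℂ) - (t₀ : ℂ)) = (d t * W ^ (t : ℂ)) / W ^ (t₀ : ℂ) := by
        intro t
        rw [Complex.cpow_sub _ _ hW0, mul_div_assoc]
      rw [tsum_congr this, tsum_div_const, hvanish m, zero_div]
    have hsplit := Summable.tsum_eq_add_tsum_ite hsum2 t₀
    rw [heq0] at hsplit
    have ht₀term : d t₀ * W ^ ((t₀ : ℂ) - (t₀ : ℂ)) = d t₀ := by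
      rw [sub_self, Complex.cpow_zero, mul_one]
    rw [ht₀term] at hsplit
    have hd0eq : d t₀ = - ∑' t : ℝ, (if t = t₀ then 0 else d t * W ^ ((t : ℂ) - (t₀ : ℂ))) :=
      eq_neg_of_add_eq_zero_left hsplit.symm
    -- bound function
    have hgsum : Summable (fun t : ℝ => (‖d t‖ * ρ ^ (t - t₀)) * (‖W‖ / ρ) ^ δ) :=
      hρsum.mul_right _
    have hbound : ∀ t : ℝ, ‖(if t = t₀ then 0 else d t * W ^ ((t : ℂ) - (t₀ : ℂ)))‖ ≤
        (‖d t‖ * ρ ^ (t - t₀)) * (‖W‖ / ρ) ^ δ := by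
      intro t
      by_cases ht : t = t₀
      · rw [if_pos ht, norm_zero]
        positivity
      · rw [if_neg ht, habs]
        by_cases hdt : d t = 0
        · rw [hdt, norm_zero, zero_mul, zero_mul]
          positivity
        · have htg := hδ t (hG t hdt) (lt_of_le_of_ne (hmin t hdt) (Ne.symm ht))
          have hle1 : ‖W‖ / ρ ≤ 1 := div_le_one_of_le₀ hm hρpos.le
          have hfrac : (‖W‖ / ρ) ^ (t - t₀) ≤ (‖W‖ / ρ) ^ δ :=
            Real.rpow_le_rpow_of_exponent_ge (by positivity) hle1 (by linarith)
          have heqW : ‖W‖ ^ (t - t₀)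
              = ρ ^ (t - t₀) * (‖W‖ / ρ) ^ (t - t₀) := by
            rw [Real.div_rpow hWpos.le hρpos.le]
            field_simp
          rw [heqW]
          calc ‖d t‖ * (ρ ^ (t - t₀) * (‖W‖ / ρ) ^ (t - t₀))
              ≤ ‖d t‖ * (ρ ^ (t - t₀) * (‖W‖ / ρ) ^ δ) := by
                apply mul_le_mul_of_nonneg_left _ (norm_nonneg _)
                exact mul_le_mul_of_nonneg_left hfrac (by positivity)
            _ = ‖d t‖ * ρ ^ (t - t₀) * (‖W‖ / ρ) ^ δ := by ring
    have hitesum : Summable (fun t : ℝ =>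
        ‖(if t = t₀ then 0 else d t * W ^ ((t : ℂ) - (t₀ : ℂ)))‖) :=
      Summable.of_nonneg_of_le (fun t => norm_nonneg _) hbound hgsum
    calc ‖d t₀‖ = ‖∑' t : ℝ, (if t = t₀ then 0 else d t * W ^ ((t : ℂ) - (t₀ : ℂ)))‖ := by
          rw [hd0eq, norm_neg]
      _ ≤ ∑' t : ℝ, ‖(if t = t₀ then 0 else d t * W ^ ((t : ℂ) - (t₀ : ℂ)))‖ :=
          norm_tsum_le_tsum_norm hitesum
      _ ≤ ∑' t : ℝ, (‖d t‖ * ρ ^ (t - t₀)) * (‖W‖ / ρ) ^ δ :=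
          Summable.tsum_le_tsum hbound hitesum hgsum
      _ = C * (‖W‖ / ρ) ^ δ := by
          rw [hC, ← tsum_mul_right]
  -- now take the limit
  have habslim : Filter.Tendsto (fun m => ‖w m‖) Filter.atTop (nhds 0) := by
    have := hwlim.norm
    simpa using this
  have hblim : Filter.Tendsto (fun m => C * (‖w m‖ / ρ) ^ δ)
      Filter.atTop (nhds 0) := by
    have h1 : Filter.Tendsto (fun m => ‖w m‖ / ρ) Filter.atTop (nhds 0) := by
      simpa using habslim.div_const ρ
    have h2 := h1.rpow_const (Or.inr hδpos.le)
    rw [Real.zero_rpow hδpos.ne'] at h2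
    simpa using h2.const_mul C
  have hev : ∀ᶠ m in Filter.atTop, ‖d t₀‖ ≤ C * (‖w m‖ / ρ) ^ δ := by
    filter_upwards [habslim.eventually (ge_mem_nhds hρpos)] with m hm
    exact key m hm
  have : ‖d t₀‖ ≤ 0 := ge_of_tendsto hblim hev
  exact ht₀ (norm_le_zero_iff.mp this)

private lemma key (G₀ : Finset ℝ) : ∀ (n : ℕ) (c : (Fin n → ℝ) → ℂ),
    (∀ μ : Fin n → ℝ, (∃ l, ¬ ∃ a ∈ G₀, ∃ m : ℕ, μ l = a + m) → c μ = 0) →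
    ∀ (r : Fin n → ℝ), (∀ l, 0 < r l) →
    (∀ z : Fin n → ℂ, (∀ l, 0 < ‖z l‖ ∧ ‖z l‖ < r l) →
      Summable (fun μ : Fin n → ℝ => ‖c μ‖ * ∏ l, ‖z l‖ ^ (μ l))) →
    ∀ (zseq : Fin n → ℕ → ℂ),
    (∀ l m, 0 < ‖zseq l m‖ ∧ ‖zseq l m‖ < r l) →
    (∀ l, Filter.Tendsto (zseq l) Filter.atTop (nhds 0)) →
    (∀ m : Fin n → ℕ, ∑' μ : Fin n → ℝ, c μ * ∏ l, (zseq l (m l)) ^ ((μ l : ℂ)) = 0) →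
    ∀ μ : Fin n → ℝ, c μ = 0 := by
  intro n
  induction n with
  | zero =>
    intro c hsupp r hr hconv zseq hzseq hzlim hvanish μ
    have h := hvanish (fun _ => 0)
    rw [tsum_eq_single μ (fun b hb => absurd (funext fun i => i.elim0) hb)] at h
    simpa using h
  | succ n IH =>
    intro c hsupp r hr hconv zseq hzseq hzlim hvanish μ
    have hFnorm : ∀ (z₀ : ℂ) (z' : Fin n → ℂ), 0 < ‖z₀‖ → ‖z₀‖ < r 0 →
        (∀ l, 0 < ‖z' l‖ ∧ ‖z' l‖ < r l.succ) →
        Summable (fun p : ℝ × (Fin n → ℝ) =>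
          ‖c (Fin.cons p.1 p.2)‖ *
            (‖z₀‖ ^ p.1 * ∏ l, ‖z' l‖ ^ p.2 l)) := by
      intro z₀ z' h0 h0r hz'
      have hz : ∀ l, 0 < ‖(Fin.cons z₀ z' : Fin (n+1) → ℂ) l‖ ∧
          ‖(Fin.cons z₀ z' : Fin (n+1) → ℂ) l‖ < r l := by
        intro l
        induction l using Fin.cases with
        | zero => rw [Fin.cons_zero]; exact ⟨h0, h0r⟩
        | succ i => rw [Fin.cons_succ]; exact hz' i
      have h1 := hconv (Fin.cons z₀ z') hz
      have h2 := ((Fin.consEquiv (fun _ : Fin (n+1) => ℝ)).summable_iff).mpr h1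
      refine h2.congr fun p => ?_
      show ‖c (Fin.cons p.1 p.2)‖ * ∏ l, ‖(Fin.cons z₀ z' : Fin (n+1) → ℂ) l‖
          ^ (Fin.cons p.1 p.2 : Fin (n+1) → ℝ) l = _
      rw [Fin.prod_univ_succ]
      simp [Fin.cons_zero, Fin.cons_succ]
    have hnn : ∀ (z₀ : ℂ) (z' : Fin n → ℂ),
        (0 : ℝ × (Fin n → ℝ) → ℝ) ≤ (fun p =>
          ‖c (Fin.cons p.1 p.2)‖ *
            (‖z₀‖ ^ p.1 * ∏ l, ‖z' l‖ ^ p.2 l)) := by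
      intro z₀ z' p
      have : (0:ℝ) ≤ ‖c (Fin.cons p.1 p.2)‖ *
          (‖z₀‖ ^ p.1 * ∏ l, ‖z' l‖ ^ p.2 l) := by positivity
      exact this
    -- inner summability (norm form, no z₀ factor)
    have hin : ∀ (z' : Fin n → ℂ),
        (∀ l, 0 < ‖z' l‖ ∧ ‖z' l‖ < r l.succ) →
        ∀ t : ℝ, Summable (fun ν : Fin n → ℝ =>
          ‖c (Fin.cons t ν)‖ * ∏ l, ‖z' l‖ ^ ν l) := by
      intro z' hz' t
      have hF := hFnorm (zseq 0 0) z' (hzseq 0 0).1 (hzseq 0 0).2 hz'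
      have hs := ((summable_prod_of_nonneg (hnn _ _)).mp hF).1 t
      have hA : 0 < ‖zseq 0 0‖ ^ t := Real.rpow_pos_of_pos (hzseq 0 0).1 t
      have := hs.mul_left (‖zseq 0 0‖ ^ t)⁻¹
      refine this.congr fun ν => ?_
      field_simp
    -- norm of a term
    have hnormterm : ∀ (W : Fin n → ℂ) (t : ℝ) (ν : Fin n → ℝ),
        ‖c (Fin.cons t ν) * ∏ l, (W l) ^ ((ν l : ℂ))‖
          = ‖c (Fin.cons t ν)‖ * ∏ l, ‖W l‖ ^ (ν l) := by
      intro W t ν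
      simp [norm_prod, Complex.norm_cpow_real]
    -- the one-variable coefficient family
    set d : (Fin n → ℕ) → ℝ → ℂ := fun m' t =>
      ∑' ν : Fin n → ℝ, c (Fin.cons t ν) * ∏ l, (zseq l.succ (m' l)) ^ ((ν l : ℂ)) with hd
    have hWcond : ∀ (m' : Fin n → ℕ) (l : Fin n),
        0 < ‖zseq l.succ (m' l)‖ ∧ ‖zseq l.succ (m' l)‖ < r l.succ :=
      fun m' l => hzseq l.succ (m' l)
    -- d vanishes identically
    have hd0 : ∀ (m' : Fin n → ℕ) (t : ℝ), d m' t = 0 := by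
      intro m'
      set W : Fin n → ℂ := fun l => zseq l.succ (m' l) with hW
      refine one_var G₀ (d m') ?_ (r 0) (hr 0) ?_ (zseq 0) (hzseq 0) (hzlim 0) ?_
      · -- support
        intro t ht
        simp only [hd]
        have : ∀ ν : Fin n → ℝ,
            c (Fin.cons t ν) * ∏ l, (zseq l.succ (m' l)) ^ ((ν l : ℂ)) = 0 := by
          intro ν
          rw [hsupp _ ⟨0, by simpa [Fin.cons_zero] using ht⟩, zero_mul]
        simp only [this, tsum_zero]
      · -- hconv for d
        intro s hs0 hsr
        have habs0 : ‖((s : ℝ) : ℂ)‖ = s := by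
          rw [Complex.norm_real, Real.norm_of_nonneg hs0.le]
        have hF := hFnorm ((s : ℝ) : ℂ) W (by rw [habs0]; exact hs0) (by rw [habs0]; exact hsr)
          (hWcond m')
        have hmarg := ((summable_prod_of_nonneg (hnn _ _)).mp hF).2
        refine Summable.of_nonneg_of_le (fun t => by positivity) (fun t => ?_) hmarg
        -- bound: ‖d m' t‖ * s ^ t ≤ ∑' ν, ...
        have hnsum : Summable (fun ν : Fin n → ℝ =>
            ‖c (Fin.cons t ν) * ∏ l, (W l) ^ ((ν l : ℂ))‖) := by
          refine (hin W (hWcond m') t).congr fun ν => (hnormterm W t ν).symm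
        have h1 : ‖d m' t‖ ≤ ∑' ν : Fin n → ℝ,
            ‖c (Fin.cons t ν)‖ * ∏ l, ‖W l‖ ^ ν l := by
          simp only [hd]
          refine le_trans (norm_tsum_le_tsum_norm hnsum) (le_of_eq ?_)
          exact tsum_congr fun ν => hnormterm W t ν
        calc ‖d m' t‖ * s ^ t ≤ (∑' ν : Fin n → ℝ,
              ‖c (Fin.cons t ν)‖ * ∏ l, ‖W l‖ ^ ν l) * s ^ t := by
              apply mul_le_mul_of_nonneg_right h1 (by positivity)
          _ = ∑' ν : Fin n → ℝ, ‖c (Fin.cons t ν)‖ *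
              (‖((s:ℝ):ℂ)‖ ^ t * ∏ l, ‖W l‖ ^ ν l) := by
              rw [← tsum_mul_right]
              exact tsum_congr fun ν => by rw [habs0]; ring
      · -- vanishing sums for d
        intro m₀
        set z₀ : ℂ := zseq 0 m₀ with hz₀
        set f : ℝ × (Fin n → ℝ) → ℂ := fun p =>
          c (Fin.cons p.1 p.2) * (z₀ ^ ((p.1 : ℂ)) * ∏ l, (W l) ^ ((p.2 l : ℂ))) with hf
        have hfnorm : ∀ p : ℝ × (Fin n → ℝ), ‖f p‖ =
            ‖c (Fin.cons p.1 p.2)‖ * (‖z₀‖ ^ p.1 * ∏ l, ‖W l‖ ^ p.2 l) := by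
          intro p
          rw [hf]
          simp [norm_prod, Complex.norm_cpow_real, mul_assoc]
        have hfsum : Summable f := by
          apply Summable.of_norm
          refine (hFnorm z₀ W (hzseq 0 m₀).1 (hzseq 0 m₀).2 (hWcond m')).congr fun p =>
            (hfnorm p).symm
        have hfslice : ∀ t : ℝ, Summable (fun ν : Fin n → ℝ => f (t, ν)) := by
          intro t
          apply Summable.of_norm
          have := ((summable_prod_of_nonneg (hnn z₀ W)).mp
            (hFnorm z₀ W (hzseq 0 m₀).1 (hzseq 0 m₀).2 (hWcond m'))).1 t
          exact this.congr fun ν => (hfnorm (t, ν)).symm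
        have hfub := Summable.tsum_prod' hfsum hfslice
        -- total sum is 0
        have htot : ∑' p : ℝ × (Fin n → ℝ), f p = 0 := by
          have h := hvanish (Fin.cons m₀ m')
          rw [← (Fin.consEquiv (fun _ : Fin (n+1) => ℝ)).tsum_eq] at h
          rw [← h]
          refine tsum_congr fun p => ?_
          show f p = c (Fin.cons p.1 p.2) * ∏ l : Fin (n+1),
            (zseq l ((Fin.cons m₀ m' : Fin (n+1) → ℕ) l)) ^ ((Fin.cons p.1 p.2 : Fin (n+1) → ℝ) l : ℂ)
          rw [Fin.prod_univ_succ, hf]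
          simp [Fin.cons_zero, Fin.cons_succ, hz₀, hW]
        have hinner : ∀ t : ℝ, ∑' ν : Fin n → ℝ, f (t, ν) = d m' t * z₀ ^ ((t : ℝ) : ℂ) := by
          intro t
          simp only [hd]
          rw [← tsum_mul_right]
          refine tsum_congr fun ν => ?_
          rw [hf]
          ring
        calc ∑' t : ℝ, d m' t * z₀ ^ ((t : ℝ) : ℂ)
            = ∑' t : ℝ, ∑' ν : Fin n → ℝ, f (t, ν) := tsum_congr fun t => (hinner t).symm
          _ = ∑' p : ℝ × (Fin n → ℝ), f p := hfub.symm
          _ = 0 := htot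
    -- apply the induction hypothesis
    have := IH (fun ν => c (Fin.cons (μ 0) ν))
      (fun ν ⟨l, hl⟩ => hsupp _ ⟨l.succ, by simpa [Fin.cons_succ] using hl⟩)
      (fun l => r l.succ) (fun l => hr l.succ)
      (fun z' hz' => hin z' hz' (μ 0))
      (fun l => zseq l.succ) (fun l m => hzseq l.succ m) (fun l => hzlim l.succ)
      (fun m' => hd0 m' (μ 0))
      (Fin.tail μ)
    rwa [Fin.cons_self_tail] at this

/-- Uniqueness of quasi-power-series expansions (Proposition A.1). -/
theorem uniqueness_of_quasi_power_series
    (G₀ : Finset ℝ) (n : ℕ) (hn : 1 ≤ n)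
    (c : (Fin n → ℝ) → ℂ)
    (hsupp : ∀ μ : Fin n → ℝ,
      (∃ l : Fin n, ¬ ∃ a ∈ G₀, ∃ m : ℕ, μ l = a + m) → c μ = 0)
    (r : Fin n → ℝ) (hr : ∀ l, 0 < r l)
    (hconv : ∀ z : Fin n → ℂ,
      (∀ l, 0 < ‖z l‖ ∧ ‖z l‖ < r l) →
      Summable (fun μ : Fin n → ℝ => ‖c μ‖ * ∏ l, ‖z l‖ ^ (μ l)))
    (zseq : Fin n → ℕ → ℂ)
    (hzseq : ∀ l m, 0 < ‖zseq l m‖ ∧ ‖zseq l m‖ < r l)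
    (hzlim : ∀ l, Filter.Tendsto (zseq l) Filter.atTop (nhds 0))
    (hvanish : ∀ m : Fin n → ℕ,
      ∑' μ : Fin n → ℝ, c μ * ∏ l, (zseq l (m l)) ^ ((μ l : ℂ)) = 0) :
    ∀ μ : Fin n → ℝ, c μ = 0 :=
  key G₀ n c hsupp r hr hconv zseq hzseq hzlim hvanish
end

section
/- One-variable case of the uniqueness of quasi-power-series expansions (proved in Appendix A.1): Let μ : ℕ → ℝ be a strictly increasing sequence of real numbers, c : ℕ → ℂ, and r > 0. Assume: (i) for every complex z with 0 < |z| < r, the series ∑_k ‖c_k‖ · |z|^{μ_k} converges; and (ii) there is a sequence (z_m)_{m∈ℕ} of complex numbers with 0 < |z_m| < r, z_m → 0, such that ∑_k c_k · z_m^{μ_k} = 0 (principal-branch complex powers) for every m. Then c_k = 0 for every k. -/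
set_option maxHeartbeats 1000000


/-- One-variable case of the uniqueness of quasi-power-series expansions. -/
theorem uniqueness_of_quasi_power_series_one_variable
    (μ : ℕ → ℝ) (hμ : StrictMono μ) (c : ℕ → ℂ) (r : ℝ) (hr : 0 < r)
    (hconv : ∀ z : ℂ, 0 < ‖z‖ → ‖z‖ < r →
      Summable (fun k : ℕ => ‖c k‖ * ‖z‖ ^ (μ k)))
    (zseq : ℕ → ℂ)
    (hz : ∀ m : ℕ, 0 < ‖zseq m‖ ∧ ‖zseq m‖ < r)
    (hlim : Filter.Tendsto zseq Filter.atTop (nhds 0))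
    (hvanish : ∀ m : ℕ, ∑' k : ℕ, c k * (zseq m) ^ ((μ k : ℂ)) = 0) :
    ∀ k : ℕ, c k = 0 := by
  have key : ∀ k0 : ℕ, (∀ j, j < k0 → c j = 0) → c k0 = 0 := by
    intro k0 hc0
    set ρ : ℝ := r / 2 with hρdef
    have hρ : 0 < ρ := by positivity
    have hρr : ρ < r := by simp only [hρdef]; linarith
    set δ : ℝ := μ (k0 + 1) - μ k0 with hδdef
    have hδ : 0 < δ := sub_pos.2 (hμ (Nat.lt_succ_self k0))
    -- summability of norms at radius ρ
    have hsumρ : Summable (fun k : ℕ => ‖c k‖ * ρ ^ (μ k)) := by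
      have h1 : ‖(ρ : ℂ)‖ = ρ := by
        simpa using abs_of_pos hρ
      have := hconv (ρ : ℂ) (by rw [h1]; exact hρ) (by rw [h1]; exact hρr)
      simpa [h1, abs_of_pos hρ] using this
    have hsumC : Summable (fun k : ℕ =>
        ‖c (k + (k0 + 1))‖ * ρ ^ (μ (k + (k0 + 1)) - μ (k0 + 1))) := by
      have h1 : Summable (fun k : ℕ => ‖c (k + (k0 + 1))‖ * ρ ^ (μ (k + (k0 + 1)))) :=
        (summable_nat_add_iff (k0 + 1)).2 hsumρ
      have h2 := h1.mul_right (ρ ^ (-(μ (k0 + 1))))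
      refine h2.congr fun k => ?_
      rw [mul_assoc, ← Real.rpow_add hρ, ← sub_eq_add_neg]
    set C : ℝ := ∑' k : ℕ, ‖c (k + (k0 + 1))‖ * ρ ^ (μ (k + (k0 + 1)) - μ (k0 + 1)) with hCdef
    have hC0 : 0 ≤ C := tsum_nonneg fun k => by positivity
    -- key bound at a point z where the series vanishes
    have hbound : ∀ z : ℂ, 0 < ‖z‖ → ‖z‖ ≤ ρ →
        (∑' k : ℕ, c k * z ^ ((μ k : ℂ))) = 0 → ‖c k0‖ ≤ C * ‖z‖ ^ δ := by
      intro z hz0 hzρ hzero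
      set x : ℝ := ‖z‖ with hxdef
      have hxr : x < r := lt_of_le_of_lt hzρ hρr
      have habs : ∀ w : ℝ, ‖z ^ (w : ℂ)‖ = x ^ w := fun w =>
        Complex.norm_cpow_real z w
      have hnorm : ∀ k : ℕ, ‖c k * z ^ ((μ k : ℂ))‖ = ‖c k‖ * x ^ (μ k) := by
        intro k
        rw [norm_mul, habs]
      have hsumnorm : Summable (fun k : ℕ => ‖c k * z ^ ((μ k : ℂ))‖) := by
        refine (hconv z hz0 hxr).congr fun k => (hnorm k).symm
      have hf : Summable (fun k : ℕ => c k * z ^ ((μ k : ℂ))) :=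
        Summable.of_norm hsumnorm
      -- strip the vanishing initial terms
      have hshift : (∑' k : ℕ, c (k + k0) * z ^ ((μ (k + k0) : ℂ))) = 0 := by
        have h1 := Summable.sum_add_tsum_nat_add k0 hf
        have h2 : (∑ i ∈ Finset.range k0, c i * z ^ ((μ i : ℂ))) = 0 := by
          refine Finset.sum_eq_zero fun i hi => ?_
          rw [hc0 i (Finset.mem_range.1 hi), zero_mul]
        rw [h2, zero_add] at h1
        rw [h1, hzero]
      have hg : Summable (fun k : ℕ => c (k + k0) * z ^ ((μ (k + k0) : ℂ))) :=
        (summable_nat_add_iff k0).2 hf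
      have hsplit := Summable.tsum_eq_zero_add hg
      rw [hshift] at hsplit
      have heq : c k0 * z ^ ((μ k0 : ℂ)) =
          -∑' k : ℕ, c (k + 1 + k0) * z ^ ((μ (k + 1 + k0) : ℂ)) := by
        have : (0 : ℂ) = c (0 + k0) * z ^ ((μ (0 + k0) : ℂ)) +
            ∑' k : ℕ, c (k + 1 + k0) * z ^ ((μ (k + 1 + k0) : ℂ)) := hsplit
        simp only [zero_add] at this
        exact eq_neg_of_add_eq_zero_left this.symm
      -- estimate the tail
      have hidx : ∀ k : ℕ, k + 1 + k0 = k + (k0 + 1) := fun k => by omega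
      have htail : ‖∑' k : ℕ, c (k + 1 + k0) * z ^ ((μ (k + 1 + k0) : ℂ))‖ ≤
          C * x ^ (μ (k0 + 1)) := by
        have hsn : Summable (fun k : ℕ => ‖c (k + 1 + k0) * z ^ ((μ (k + 1 + k0) : ℂ))‖) := by
          have := (summable_nat_add_iff (k0 + 1)).2 hsumnorm
          exact this.congr fun k => by rw [hidx k]
        refine le_trans (norm_tsum_le_tsum_norm hsn) ?_
        have hrhs : Summable (fun k : ℕ =>
            ‖c (k + (k0 + 1))‖ * ρ ^ (μ (k + (k0 + 1)) - μ (k0 + 1)) * x ^ (μ (k0 + 1))) :=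
          hsumC.mul_right _
        have hle : ∀ k : ℕ, ‖c (k + 1 + k0) * z ^ ((μ (k + 1 + k0) : ℂ))‖ ≤
            ‖c (k + (k0 + 1))‖ * ρ ^ (μ (k + (k0 + 1)) - μ (k0 + 1)) * x ^ (μ (k0 + 1)) := by
          intro k
          rw [hidx k, hnorm]
          have hxsplit : x ^ (μ (k + (k0 + 1))) =
              x ^ (μ (k + (k0 + 1)) - μ (k0 + 1)) * x ^ (μ (k0 + 1)) := by
            rw [← Real.rpow_add hz0, sub_add_cancel]
          rw [hxsplit, ← mul_assoc]
          have hexp : 0 ≤ μ (k + (k0 + 1)) - μ (k0 + 1) :=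
            sub_nonneg.2 (hμ.monotone (Nat.le_add_left (k0 + 1) k))
          have hxρ : x ^ (μ (k + (k0 + 1)) - μ (k0 + 1)) ≤
              ρ ^ (μ (k + (k0 + 1)) - μ (k0 + 1)) :=
            Real.rpow_le_rpow hz0.le hzρ hexp
          have h0 : 0 ≤ x ^ (μ (k0 + 1)) := Real.rpow_nonneg hz0.le _
          exact mul_le_mul_of_nonneg_right
            (mul_le_mul_of_nonneg_left hxρ (norm_nonneg _)) h0
        calc (∑' k : ℕ, ‖c (k + 1 + k0) * z ^ ((μ (k + 1 + k0) : ℂ))‖)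
            ≤ ∑' k : ℕ, ‖c (k + (k0 + 1))‖ * ρ ^ (μ (k + (k0 + 1)) - μ (k0 + 1)) *
                x ^ (μ (k0 + 1)) := Summable.tsum_le_tsum hle hsn hrhs
          _ = C * x ^ (μ (k0 + 1)) := by rw [← tsum_mul_right]
      -- conclude
      have hmain : ‖c k0‖ * x ^ (μ k0) ≤ C * x ^ (μ (k0 + 1)) := by
        calc ‖c k0‖ * x ^ (μ k0) = ‖c k0 * z ^ ((μ k0 : ℂ))‖ := (hnorm k0).symm
          _ = ‖∑' k : ℕ, c (k + 1 + k0) * z ^ ((μ (k + 1 + k0) : ℂ))‖ := by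
              rw [heq, norm_neg]
          _ ≤ C * x ^ (μ (k0 + 1)) := htail
      have hx0pos : 0 < x ^ (μ k0) := Real.rpow_pos_of_pos hz0 _
      have hμsplit : x ^ (μ (k0 + 1)) = x ^ δ * x ^ (μ k0) := by
        rw [← Real.rpow_add hz0, hδdef, sub_add_cancel]
      rw [hμsplit, ← mul_assoc] at hmain
      exact le_of_mul_le_mul_right hmain hx0pos
    -- take the limit along zseq
    have habsseq : Filter.Tendsto (fun m => ‖zseq m‖) Filter.atTop (nhds 0) := by
      have := hlim.norm
      simpa using this
    have hev : ∀ᶠ m in Filter.atTop, ‖c k0‖ ≤ C * ‖zseq m‖ ^ δ := by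
      filter_upwards [habsseq.eventually (gt_mem_nhds hρ)] with m hm
      exact hbound (zseq m) (hz m).1 hm.le (hvanish m)
    have hlim2 : Filter.Tendsto (fun m => C * ‖zseq m‖ ^ δ)
        Filter.atTop (nhds 0) := by
      have hcont : Filter.Tendsto (fun m => ‖zseq m‖ ^ δ)
          Filter.atTop (nhds ((0 : ℝ) ^ δ)) :=
        ((Real.continuousAt_rpow_const 0 δ (Or.inr hδ.le)).tendsto).comp habsseq
      rw [Real.zero_rpow hδ.ne'] at hcont
      simpa using hcont.const_mul C
    have : ‖c k0‖ ≤ 0 := ge_of_tendsto hlim2 hev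
    exact norm_le_zero_iff.1 this
  intro k
  induction k using Nat.strong_induction_on with
  | _ k ih => exact key k ih
end

section
/- Nonnegativity of weights of L₁-locally-nilpotent eigenvectors (general case of Proposition 1.11, positive energy): Let W be a complex inner product space and let L₋₁, L₀, L₁ be linear endomorphisms of W such that (i) ⟨L₋₁u, v⟩ = ⟨u, L₁v⟩ for all u, v ∈ W, (ii) L₁∘L₋₁ − L₋₁∘L₁ = 2·L₀, and (iii) L₀∘L₁ − L₁∘L₀ = −L₁. If w ∈ W is nonzero, s ∈ ℝ, L₀w = s·w, and there exists m ∈ ℕ with L₁^{m+1}w = 0 (iterated composition), then s ≥ 0. -/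
/-- Nonnegativity of weights of L₁-locally-nilpotent eigenvectors
(general case of Proposition 1.11, positive energy). -/
theorem locally_nilpotent_eigenvector_weight_nonneg
    {W : Type*} [NormedAddCommGroup W] [InnerProductSpace ℂ W]
    (Lm1 L0 L1 : Module.End ℂ W)
    (hadj : ∀ u v : W, (inner ℂ (Lm1 u) v : ℂ) = inner ℂ u (L1 v))
    (hcomm : L1 ∘ₗ Lm1 - Lm1 ∘ₗ L1 = (2 : ℂ) • L0)
    (hcomm' : L0 ∘ₗ L1 - L1 ∘ₗ L0 = -L1)
    (w : W) (hw : w ≠ 0) (s : ℝ)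
    (hL0 : L0 w = (s : ℂ) • w)
    (hnil : ∃ m : ℕ, (L1 ^ (m + 1)) w = 0) :
    0 ≤ s := by
  classical
  -- pointwise commutation rule: L0 ∘ L1 = L1 ∘ L0 - L1
  have hc' : ∀ x : W, L0 (L1 x) = L1 (L0 x) - L1 x := by
    intro x
    have h := LinearMap.congr_fun hcomm' x
    simp only [LinearMap.sub_apply, LinearMap.comp_apply, LinearMap.neg_apply] at h
    have := sub_eq_iff_eq_add.mp h
    rw [this]; abel
  -- eigenvalue of L1^n w
  have heig : ∀ n : ℕ, L0 ((L1 ^ n) w) = ((s : ℂ) - n) • (L1 ^ n) w := by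
    intro n
    induction n with
    | zero => simpa using hL0
    | succ n ih =>
      have hpow : (L1 ^ (n + 1)) w = L1 ((L1 ^ n) w) := by
        rw [pow_succ']; rfl
      rw [hpow, hc' ((L1 ^ n) w), ih, map_smul]
      push_cast
      module
  -- minimal k
  have hex : ∃ n : ℕ, (L1 ^ (n + 1)) w = 0 := hnil
  set k := Nat.find hex with hk
  set v := (L1 ^ k) w with hv
  have hkmin : ∀ j, j < k → (L1 ^ (j + 1)) w ≠ 0 := fun j hj => Nat.find_min hex hj
  have hvne : v ≠ 0 := by
    rw [hv]
    rcases Nat.eq_zero_or_pos k with h0 | h0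
    · rw [h0]; simpa using hw
    · intro hz
      refine hkmin (k - 1) (Nat.sub_lt h0 one_pos) ?_
      have hkk : k - 1 + 1 = k := by omega
      rw [hkk]; exact hz
  have hL1v : L1 v = 0 := by
    have := Nat.find_spec hex
    rw [← this, pow_succ']
    rfl
  have hL0v : L0 v = ((s : ℂ) - k) • v := heig k
  -- L1 (Lm1 v) = 2 • L0 v
  have hLL : L1 (Lm1 v) = (2 : ℂ) • L0 v := by
    have h := LinearMap.congr_fun hcomm v
    simp only [LinearMap.sub_apply, LinearMap.comp_apply, LinearMap.smul_apply] at h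
    rw [hL1v, map_zero, sub_zero] at h
    exact h
  have hinner : (inner ℂ (Lm1 v) (Lm1 v) : ℂ) = (2 * ((s : ℂ) - k)) * inner ℂ v v := by
    rw [hadj v (Lm1 v), hLL, hL0v, smul_smul, inner_smul_right]
  have h1 : (inner ℂ (Lm1 v) (Lm1 v) : ℂ) = (‖Lm1 v‖ : ℂ) ^ 2 := inner_self_eq_norm_sq_to_K _
  have h2 : (inner ℂ v v : ℂ) = (‖v‖ : ℂ) ^ 2 := inner_self_eq_norm_sq_to_K _
  rw [h1, h2] at hinner
  have hre : (‖Lm1 v‖ : ℝ) ^ 2 = 2 * (s - k) * ‖v‖ ^ 2 := by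
    exact_mod_cast hinner
  have hknn : (0 : ℝ) ≤ 2 * (s - k) * ‖v‖ ^ 2 := hre ▸ sq_nonneg _
  have hvpos : 0 < ‖v‖ ^ 2 := pow_pos (norm_pos_iff.2 hvne) 2
  nlinarith [Nat.cast_nonneg (α := ℝ) k]
end
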